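/- Let K be a number field with ring of integers O_K and 𝔫 a nonzero ideal. Let 𝔞 be an ideal dividing 𝔫 and u ∈ O_K. Then the number of units a of O_K/𝔫 with a ≡ u (mod 𝔞) equals φ(𝔫)/φ(𝔞) if u is coprime to 𝔞, and 0 otherwise. -/

import Mathlib

open NumberField

set_option synthInstance.maxHeartbeats 1000000
set_option maxHeartbeats 1000000

lemma exists_idem_pow {M : Type*} [Monoid M] [Finite M] (x : M) :
    ∃ n : ℕ, 0 < n ∧ IsIdempotentElem (x ^ n) := by
  obtain ⟨i, j, hij, hpow⟩ := Finite.exists_ne_map_eq_of_infinite (fun n : ℕ => x ^ n)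
  wlog hlt : i < j generalizing i j
  · exact this j i hij.symm hpow.symm (by omega)
  set d := j - i with hd
  have hd1 : 0 < d := by omega
  have key : ∀ m, i ≤ m → x ^ (m + d) = x ^ m := by
    intro m hm
    have : m + d = (m - i) + (i + d) := by omega
    rw [this, pow_add, show i + d = j by omega, ← hpow, ← pow_add,
      show m - i + i = m by omega]
  have key2 : ∀ c m, i ≤ m → x ^ (m + c * d) = x ^ m := by
    intro c
    induction c with
    | zero => simp
    | succ c ih =>
      intro m hm
      have : m + (c + 1) * d = (m + d) + c * d := by ring
      rw [this, ih (m + d) (by omega), key m hm]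
  refine ⟨d * (i + 1), by positivity, ?_⟩
  unfold IsIdempotentElem
  rw [← pow_add]
  have : d * (i + 1) + d * (i + 1) = d * (i + 1) + (i + 1) * d := by ring
  rw [this, key2 (i + 1) _ (by nlinarith)]

lemma isUnit_lift {R S : Type*} [CommRing R] [Finite R] [CommRing S] (f : R →+* S)
    {x : R} (h : IsUnit (f x)) : ∃ y : R, f y = f x ∧ IsUnit y := by
  obtain ⟨n, hn, he⟩ := exists_idem_pow x
  set e := x ^ n with hedef
  have hu : IsUnit (f e) := by rw [hedef, map_pow]; exact h.pow n
  have hfe : f e = 1 := hu.mul_left_cancel (by rw [mul_one, ← map_mul, he])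
  set w := x ^ (n - 1) with hw
  have hwx : w * x = e := by rw [hw, hedef, ← pow_succ, show n - 1 + 1 = n by omega]
  have he' : e * e = e := he
  refine ⟨x * e + 1 - e, ?_, ?_⟩
  · simp [map_add, map_sub, map_mul, hfe]
  · refine IsUnit.of_mul_eq_one (w * e + 1 - e) ?_
    linear_combination e * hwx + (x * w - x - w + 2) * he'

lemma isUnit_mk_iff' {R : Type*} [CommRing R] (I : Ideal R) (u : R) :
    IsUnit (Ideal.Quotient.mk I u) ↔ Ideal.span {u} ⊔ I = ⊤ := by
  constructor
  · rintro ⟨v, hv⟩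
    obtain ⟨c, hc⟩ := Ideal.Quotient.mk_surjective ((v⁻¹ : (R ⧸ I)ˣ) : R ⧸ I)
    have h1 : Ideal.Quotient.mk I (c * u) = 1 := by
      rw [map_mul, hc, ← hv]; exact v.inv_mul
    have h2 : c * u - 1 ∈ I :=
      Ideal.Quotient.eq.mp (h1.trans (map_one (Ideal.Quotient.mk I)).symm)
    rw [eq_top_iff]
    intro z _
    have : z = z * (c * u) - z * (c * u - 1) := by ring
    rw [this]
    refine sub_mem (Ideal.mem_sup_left ?_) (Ideal.mem_sup_right (I.mul_mem_left z h2))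
    rw [Ideal.mem_span_singleton]
    exact ⟨z * c, by ring⟩
  · intro h
    have h1 : (1 : R) ∈ Ideal.span {u} ⊔ I := h ▸ Submodule.mem_top
    obtain ⟨a, ha, b, hb, hab⟩ := Submodule.mem_sup.mp h1
    obtain ⟨c, hc⟩ := Ideal.mem_span_singleton'.mp ha
    refine IsUnit.of_mul_eq_one (Ideal.Quotient.mk I c) ?_
    rw [← map_mul, show u * c = 1 - b by rw [← hab, ← hc]; ring, map_sub, map_one,
      Ideal.Quotient.eq_zero_iff_mem.mpr hb, sub_zero]

open Classical in
theorem count_units_congruent (K : Type*) [Field K] [NumberField K]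
    (𝔫 𝔞 : Ideal (𝓞 K)) (h𝔫 : 𝔫 ≠ ⊥) (h𝔞 : 𝔞 ∣ 𝔫) (u : 𝓞 K) :
    (Nat.card {a : (𝓞 K ⧸ 𝔫)ˣ //
        ∀ y : 𝓞 K, Ideal.Quotient.mk 𝔫 y = (a : 𝓞 K ⧸ 𝔫) →
          Ideal.Quotient.mk 𝔞 y = Ideal.Quotient.mk 𝔞 u} : ℚ) =
      if Ideal.span {u} ⊔ 𝔞 = ⊤ then
        (Nat.card ((𝓞 K ⧸ 𝔫)ˣ) : ℚ) / (Nat.card ((𝓞 K ⧸ 𝔞)ˣ) : ℚ)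
      else 0 := by
  have hle : 𝔫 ≤ 𝔞 := Ideal.le_of_dvd h𝔞
  have h𝔞bot : 𝔞 ≠ ⊥ := fun hb => h𝔫 (le_bot_iff.mp (hb ▸ hle))
  haveI : Fintype (𝓞 K ⧸ 𝔫) := @Fintype.ofFinite _ (Ideal.finiteQuotientOfFreeOfNeBot 𝔫 h𝔫)
  haveI : Fintype (𝓞 K ⧸ 𝔞) := @Fintype.ofFinite _ (Ideal.finiteQuotientOfFreeOfNeBot 𝔞 h𝔞bot)
  set f : (𝓞 K ⧸ 𝔫) →+* (𝓞 K ⧸ 𝔞) := Ideal.Quotient.factor hle with hf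
  set φ : (𝓞 K ⧸ 𝔫)ˣ →* (𝓞 K ⧸ 𝔞)ˣ := Units.map (f : (𝓞 K ⧸ 𝔫) →* (𝓞 K ⧸ 𝔞)) with hφ
  have hφcoe : ∀ a : (𝓞 K ⧸ 𝔫)ˣ, (φ a : 𝓞 K ⧸ 𝔞) = f (a : 𝓞 K ⧸ 𝔫) := fun a => rfl
  have hcond : ∀ a : (𝓞 K ⧸ 𝔫)ˣ,
      (∀ y : 𝓞 K, Ideal.Quotient.mk 𝔫 y = (a : 𝓞 K ⧸ 𝔫) →
        Ideal.Quotient.mk 𝔞 y = Ideal.Quotient.mk 𝔞 u)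
      ↔ (φ a : 𝓞 K ⧸ 𝔞) = Ideal.Quotient.mk 𝔞 u := by
    intro a
    constructor
    · intro h
      obtain ⟨y, hy⟩ := Ideal.Quotient.mk_surjective (a : 𝓞 K ⧸ 𝔫)
      rw [hφcoe, ← hy, hf, Ideal.Quotient.factor_mk]
      exact h y hy
    · intro h y hy
      have h2 : f (Ideal.Quotient.mk 𝔫 y) = Ideal.Quotient.mk 𝔞 y :=
        Ideal.Quotient.factor_mk hle y
      rw [← h2, hy, ← hφcoe, h]
  by_cases h : Ideal.span {u} ⊔ 𝔞 = ⊤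
  · rw [if_pos h]
    obtain ⟨v, hv⟩ := (isUnit_mk_iff' 𝔞 u).mpr h
    have hsurj : Function.Surjective φ := by
      intro w
      obtain ⟨x, hx⟩ := Ideal.Quotient.mk_surjective ((w : (𝓞 K ⧸ 𝔞)ˣ) : 𝓞 K ⧸ 𝔞)
      have hfx : f (Ideal.Quotient.mk 𝔫 x) = (w : 𝓞 K ⧸ 𝔞) := by
        rw [hf, Ideal.Quotient.factor_mk]; exact hx
      have hux : IsUnit (f (Ideal.Quotient.mk 𝔫 x)) := by rw [hfx]; exact w.isUnit
      obtain ⟨y, hy1, hy2⟩ := isUnit_lift f hux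
      obtain ⟨c, hc⟩ := hy2
      refine ⟨c, Units.ext ?_⟩
      rw [hφcoe, hc, hy1, hfx]
    have hcard : Nat.card {a : (𝓞 K ⧸ 𝔫)ˣ //
        ∀ y : 𝓞 K, Ideal.Quotient.mk 𝔫 y = (a : 𝓞 K ⧸ 𝔫) →
          Ideal.Quotient.mk 𝔞 y = Ideal.Quotient.mk 𝔞 u} = Nat.card (MonoidHom.ker φ) := by
      refine Nat.card_congr ?_
      refine (Equiv.subtypeEquivRight (fun a => ?_)).trans
        (MonoidHom.fiberEquivKerOfSurjective hsurj v)
      rw [hcond a, ← hv, Set.mem_preimage, Set.mem_singleton_iff, Units.ext_iff]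
    have h1 : Nat.card ((𝓞 K ⧸ 𝔫)ˣ) = Nat.card ((𝓞 K ⧸ 𝔞)ˣ) * Nat.card (MonoidHom.ker φ) := by
      rw [Subgroup.card_eq_card_quotient_mul_card_subgroup (MonoidHom.ker φ)]
      congr 1
      exact Nat.card_congr (QuotientGroup.quotientKerEquivOfSurjective φ hsurj).toEquiv
    have h2 : (Nat.card ((𝓞 K ⧸ 𝔞)ˣ) : ℚ) ≠ 0 := by
      exact_mod_cast Nat.card_pos.ne'
    rw [hcard, h1]
    push_cast
    field_simp
  · rw [if_neg h]
    have hempty : IsEmpty {a : (𝓞 K ⧸ 𝔫)ˣ //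
        ∀ y : 𝓞 K, Ideal.Quotient.mk 𝔫 y = (a : 𝓞 K ⧸ 𝔫) →
          Ideal.Quotient.mk 𝔞 y = Ideal.Quotient.mk 𝔞 u} := by
      constructor
      rintro ⟨a, ha⟩
      exact h ((isUnit_mk_iff' 𝔞 u).mp ((hcond a).mp ha ▸ (φ a).isUnit))
    rw [Nat.card_of_isEmpty]
    norm_num
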